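/- Let c > 0, τ̃ ∈ ℂ, and let W : ℝ → ℂ be three times continuously differentiable and satisfy (τ̃ − z²)² W'(z) + i d³/dz³( (τ̃ − z²) W(z) ) = 0 for all z ∈ ℝ. Define τ := c^{1/2} τ̃ and V(z) := c^{1/2} [ (τ̃ − c^{1/2} z²) W(c^{1/4} z) − 1_{(0,∞)}(z) (τ̃ − c^{1/2} z²) ]. Then V is three times continuously differentiable on ℝ\{0}, and with b := −2c (playing the role of U_s''(a) < 0): (τ + b z²/2) V'(z) − b z V(z) + i V'''(z) = 0 for all z ≠ 0, and the jumps at z = 0 satisfy [V] = −τ, [V'] = 0, [V''] = −b, where [g] := lim_{z→0+} g(z) − lim_{z→0−} g(z). -/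

import Mathlib

open Set Filter

/-!
STATEMENT 4: rescaling the normalized shear-layer ODE for W to the profile V
solving the jump problem with b = U_s''(a) = -2c < 0.
-/

/-- The rescaled profile
`V(z) = c^{1/2}[ (τ̃ − c^{1/2} z²) W(c^{1/4} z) − 1_{(0,∞)}(z)(τ̃ − c^{1/2} z²) ]`. -/
noncomputable def Vresc (c : ℝ) (τt : ℂ) (W : ℝ → ℂ) (z : ℝ) : ℂ :=
  ((c ^ ((1:ℝ)/2) : ℝ) : ℂ) *
    ((τt - ((c ^ ((1:ℝ)/2) * z ^ 2 : ℝ) : ℂ)) * W ((c ^ ((1:ℝ)/4) : ℝ) * z)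
      - (if 0 < z then τt - ((c ^ ((1:ℝ)/2) * z ^ 2 : ℝ) : ℂ) else 0))

private lemma hasDerivAt_ofReal (x : ℝ) : HasDerivAt (fun z : ℝ => (z : ℂ)) 1 x := by
  simpa using (hasDerivAt_id x).ofReal_comp

private lemma hasDerivAt_ofReal_sq (x : ℝ) :
    HasDerivAt (fun z : ℝ => (z : ℂ) ^ 2) (2 * (x : ℂ)) x := by
  have h := (hasDerivAt_ofReal x).mul (hasDerivAt_ofReal x)
  have he : (fun z : ℝ => (z : ℂ) ^ 2) = fun z : ℝ => (z : ℂ) * (z : ℂ) := by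
    funext z; ring
  rw [he]
  refine h.congr_deriv ?_
  ring

theorem rescaled_profile
    (c : ℝ) (hc : 0 < c) (τt : ℂ)
    (W : ℝ → ℂ) (hW : ContDiff ℝ 3 W)
    (hODE : ∀ z : ℝ,
      (τt - ((z ^ 2 : ℝ) : ℂ)) ^ 2 * deriv W z
        + Complex.I * iteratedDeriv 3 (fun z' => (τt - ((z' ^ 2 : ℝ) : ℂ)) * W z') z = 0) :
    -- with τ := c^{1/2} τ̃, b := −2c, V := Vresc c τ̃ W:
    ContDiffOn ℝ 3 (Vresc c τt W) {(0:ℝ)}ᶜ ∧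
    (∀ z : ℝ, z ≠ 0 →
      (((c ^ ((1:ℝ)/2) : ℝ) : ℂ) * τt + (((-2*c) * z ^ 2 / 2 : ℝ) : ℂ)) * deriv (Vresc c τt W) z
        - (((-2*c) * z : ℝ) : ℂ) * Vresc c τt W z
        + Complex.I * iteratedDeriv 3 (Vresc c τt W) z = 0) ∧
    ∃ p₀ q₀ p₁ q₁ p₂ q₂ : ℂ,
      Tendsto (Vresc c τt W) (nhdsWithin 0 (Ioi 0)) (nhds p₀) ∧
      Tendsto (Vresc c τt W) (nhdsWithin 0 (Iio 0)) (nhds q₀) ∧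
      p₀ - q₀ = -(((c ^ ((1:ℝ)/2) : ℝ) : ℂ) * τt) ∧
      Tendsto (deriv (Vresc c τt W)) (nhdsWithin 0 (Ioi 0)) (nhds p₁) ∧
      Tendsto (deriv (Vresc c τt W)) (nhdsWithin 0 (Iio 0)) (nhds q₁) ∧
      p₁ - q₁ = 0 ∧
      Tendsto (iteratedDeriv 2 (Vresc c τt W)) (nhdsWithin 0 (Ioi 0)) (nhds p₂) ∧
      Tendsto (iteratedDeriv 2 (Vresc c τt W)) (nhdsWithin 0 (Iio 0)) (nhds q₂) ∧
      p₂ - q₂ = -(((-2*c : ℝ) : ℂ)) := by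
  -- abbreviations
  set s : ℝ := c ^ ((1:ℝ)/2) with hs
  set l : ℝ := c ^ ((1:ℝ)/4) with hl
  have hsl : l ^ 2 = s := by
    rw [hl, hs, ← Real.rpow_natCast (c ^ ((1:ℝ)/4)) 2, ← Real.rpow_mul hc.le]
    norm_num
  have hs2 : s ^ 2 = c := by
    rw [hs, ← Real.rpow_natCast (c ^ ((1:ℝ)/2)) 2, ← Real.rpow_mul hc.le]
    norm_num
  have hsC : (s : ℂ) = (l : ℂ) ^ 2 := by exact_mod_cast congrArg Complex.ofReal hsl.symm
  have hcC : ((c : ℝ) : ℂ) = (l : ℂ) ^ 4 := by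
    have : (l ^ 2) ^ 2 = c := by rw [hsl, hs2]
    push_cast [← this]; ring
  -- the function F and its basic properties
  set F : ℝ → ℂ := fun y => (τt - ((y ^ 2 : ℝ) : ℂ)) * W y with hF_def
  have hF : ContDiff ℝ 3 F := by
    have h1 : ContDiff ℝ 3 (fun y : ℝ => ((y ^ 2 : ℝ) : ℂ)) := by
      have : (fun y : ℝ => ((y ^ 2 : ℝ) : ℂ)) = fun y : ℝ => ((y : ℂ)) ^ 2 := by
        funext y; push_cast; ring
      rw [this]
      exact (Complex.ofRealCLM.contDiff).pow 2
    exact (contDiff_const.sub h1).mul hW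
  -- derivative of F
  have hF1 : ∀ y : ℝ, HasDerivAt F
      ((τt - ((y ^ 2 : ℝ) : ℂ)) * deriv W y - 2 * (y : ℂ) * W y) y := by
    intro y
    have hsq : HasDerivAt (fun y : ℝ => ((y ^ 2 : ℝ) : ℂ)) (2 * (y : ℂ)) y := by
      have h2 : HasDerivAt (fun y : ℝ => ((y : ℂ)) ^ 2) (2 * (y : ℂ)) y :=
        hasDerivAt_ofReal_sq y
      have : (fun y : ℝ => ((y ^ 2 : ℝ) : ℂ)) = fun y : ℝ => ((y : ℂ)) ^ 2 := by
        funext y; push_cast; ring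
      rw [this]; exact h2
    have hW' : HasDerivAt W (deriv W y) y :=
      ((hW.differentiable (by norm_num)) y).hasDerivAt
    have := ((hasDerivAt_const y τt).sub hsq).mul hW'
    refine this.congr_deriv ?_
    simp only [Pi.sub_apply]
    ring
  have hderivF : deriv F = fun y => (τt - ((y ^ 2 : ℝ) : ℂ)) * deriv W y - 2 * (y : ℂ) * W y :=
    funext fun y => (hF1 y).deriv
  -- the side profiles and their derivative towers
  set G : ℕ → ℝ → ℂ := fun n x => (s : ℂ) * (l : ℂ) ^ n * iteratedDeriv n F (l * x) with hG_def
  have key : ∀ n : ℕ, n < 3 → ∀ z : ℝ, HasDerivAt (G n) (G (n+1) z) z := by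
    intro n hn z
    have hd : DifferentiableAt ℝ (iteratedDeriv n F) (l * z) :=
      (hF.differentiable_iteratedDeriv n (by exact_mod_cast hn)) (l * z)
    have houter : HasDerivAt (iteratedDeriv n F) (iteratedDeriv (n+1) F (l * z)) (l * z) := by
      rw [iteratedDeriv_succ]; exact hd.hasDerivAt
    have hin : HasDerivAt (fun x : ℝ => l * x) l z := by
      simpa using (hasDerivAt_id z).const_mul l
    have hcomp : HasDerivAt (fun x : ℝ => iteratedDeriv n F (l * x))
        (l • iteratedDeriv (n+1) F (l * z)) z := houter.scomp z hin
    have := hcomp.const_mul ((s : ℂ) * (l : ℂ) ^ n)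
    refine this.congr_deriv ?_
    simp [hG_def, Complex.real_smul]
    ring
  have hGcont : ∀ n : ℕ, n ≤ 3 → Continuous (G n) := by
    intro n hn
    exact continuous_const.mul
      ((hF.continuous_iteratedDeriv n (by exact_mod_cast hn)).comp
        (continuous_const.mul continuous_id))
  -- Q : quadratic correction on the positive side, and its derivatives
  set Q : ℕ → ℝ → ℂ := fun n z =>
    match n with
    | 0 => ((c : ℝ) : ℂ) * (z : ℂ) ^ 2 - (s : ℂ) * τt
    | 1 => 2 * ((c : ℝ) : ℂ) * (z : ℂ)
    | 2 => 2 * ((c : ℝ) : ℂ)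
    | _ => 0
    with hQ_def
  have keyQ : ∀ n : ℕ, n < 3 → ∀ z : ℝ, HasDerivAt (Q n) (Q (n+1) z) z := by
    intro n hn z
    interval_cases n
    · have := ((hasDerivAt_ofReal_sq z).const_mul ((c : ℝ) : ℂ)).sub_const ((s : ℂ) * τt)
      refine this.congr_deriv ?_
      simp [hQ_def]; ring
    · have := (hasDerivAt_ofReal z).const_mul (2 * ((c : ℝ) : ℂ))
      refine this.congr_deriv ?_
      simp [hQ_def]
    · simpa [hQ_def] using hasDerivAt_const z (2 * ((c : ℝ) : ℂ))
  -- the two smooth one-sided models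
  set P : ℕ → ℝ → ℂ := fun n z => G n z + Q n z with hP_def
  have keyP : ∀ n : ℕ, n < 3 → ∀ z : ℝ, HasDerivAt (P n) (P (n+1) z) z := by
    intro n hn z
    exact (key n hn z).add (keyQ n hn z)
  have hPcont : ∀ n : ℕ, n ≤ 3 → Continuous (P n) := by
    intro n hn
    refine (hGcont n hn).add ?_
    interval_cases n
    · exact (continuous_const.mul ((Complex.continuous_ofReal).pow 2)).sub continuous_const
    · exact continuous_const.mul Complex.continuous_ofReal
    · exact continuous_const
    · exact continuous_const
  -- derivative towers as equalities of functions
  have hGderiv : ∀ n : ℕ, n < 3 → deriv (G n) = G (n+1) := by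
    intro n hn; funext z; exact (key n hn z).deriv
  have hPderiv : ∀ n : ℕ, n < 3 → deriv (P n) = P (n+1) := by
    intro n hn; funext z; exact (keyP n hn z).deriv
  have hGiter : ∀ n : ℕ, n ≤ 3 → iteratedDeriv n (G 0) = G n := by
    intro n hn
    induction n with
    | zero => simp [iteratedDeriv_zero]
    | succ m ih =>
      rw [iteratedDeriv_succ, ih (le_trans (Nat.le_succ m) hn), hGderiv m (by omega)]
  have hPiter : ∀ n : ℕ, n ≤ 3 → iteratedDeriv n (P 0) = P n := by
    intro n hn
    induction n with
    | zero => simp [iteratedDeriv_zero]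
    | succ m ih =>
      rw [iteratedDeriv_succ, ih (le_trans (Nat.le_succ m) hn), hPderiv m (by omega)]
  -- identification of Vresc with the models on each side
  have hpos : ∀ z : ℝ, 0 < z → Vresc c τt W z = P 0 z := by
    intro z hz
    simp only [Vresc, hP_def, hG_def, hQ_def, if_pos hz, ← hs, ← hl, iteratedDeriv_zero, hF_def]
    push_cast
    rw [hsC, hcC]
    ring
  have hneg : ∀ z : ℝ, z < 0 → Vresc c τt W z = G 0 z := by
    intro z hz
    simp only [Vresc, hG_def, if_neg (not_lt.2 hz.le), iteratedDeriv_zero, hF_def, ← hs, ← hl]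
    push_cast
    rw [hsC]
    ring
  -- smoothness of the models
  have hGsmooth : ContDiff ℝ 3 (G 0) := by
    have h1 : ContDiff ℝ 3 (F ∘ fun x : ℝ => l * x) := hF.comp (contDiff_const.mul contDiff_id)
    have he : G 0 = fun x : ℝ => ((s : ℂ) * (l : ℂ) ^ 0) * (F ∘ fun x : ℝ => l * x) x := by
      funext x; simp [hG_def, Function.comp]
    rw [he]
    exact contDiff_const.mul h1
  have hPsmooth : ContDiff ℝ 3 (P 0) := by
    refine hGsmooth.add ?_
    simp only [hQ_def]
    have : (fun z : ℝ => ((c : ℝ) : ℂ) * (z : ℂ) ^ 2 - (s : ℂ) * τt)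
        = fun z : ℝ => ((c : ℝ) : ℂ) * ((z : ℂ)) ^ 2 - (s : ℂ) * τt := rfl
    exact (contDiff_const.mul ((Complex.ofRealCLM.contDiff).pow 2)).sub contDiff_const
  -- eventual equality near each nonzero point
  have hevpos : ∀ z : ℝ, 0 < z → Vresc c τt W =ᶠ[nhds z] P 0 := by
    intro z hz
    filter_upwards [eventually_gt_nhds hz] with x hx using hpos x hx
  have hevneg : ∀ z : ℝ, z < 0 → Vresc c τt W =ᶠ[nhds z] G 0 := by
    intro z hz
    filter_upwards [eventually_lt_nhds hz] with x hx using hneg x hx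
  refine ⟨?_, ?_, ?_⟩
  · -- ContDiffOn
    intro x hx
    rcases lt_or_gt_of_ne (show x ≠ 0 by simpa using hx) with hx0 | hx0
    · exact ((hGsmooth.contDiffAt).congr_of_eventuallyEq (hevneg x hx0)).contDiffWithinAt
    · exact ((hPsmooth.contDiffAt).congr_of_eventuallyEq (hevpos x hx0)).contDiffWithinAt
  · -- the ODE away from 0
    intro z hz
    rcases lt_or_gt_of_ne hz with hz0 | hz0
    · -- negative side
      have hev := hevneg z hz0
      have e0 : Vresc c τt W z = G 0 z := hneg z hz0
      have e1 : deriv (Vresc c τt W) z = G 1 z := by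
        rw [hev.deriv_eq, hGderiv 0 (by norm_num)]
      have e3 : iteratedDeriv 3 (Vresc c τt W) z = G 3 z := by
        rw [hev.iteratedDeriv_eq 3, hGiter 3 le_rfl]
      rw [e0, e1, e3]
      simp only [hG_def, iteratedDeriv_one, hderivF]
      have e00 : iteratedDeriv 0 F (l * z) = (τt - (((l * z) ^ 2 : ℝ) : ℂ)) * W (l * z) := by
        rw [iteratedDeriv_zero]
      rw [e00]
      have hode := hODE (l * z)
      push_cast [hsC, hcC] at hode ⊢
      linear_combination ((l:ℂ)^2 * (l:ℂ)^3) * hode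
    · -- positive side
      have hev := hevpos z hz0
      have e0 : Vresc c τt W z = P 0 z := hpos z hz0
      have e1 : deriv (Vresc c τt W) z = P 1 z := by
        rw [hev.deriv_eq, hPderiv 0 (by norm_num)]
      have e3 : iteratedDeriv 3 (Vresc c τt W) z = P 3 z := by
        rw [hev.iteratedDeriv_eq 3, hPiter 3 le_rfl]
      rw [e0, e1, e3]
      simp only [hP_def, hG_def, hQ_def, iteratedDeriv_one, hderivF]
      have e00 : iteratedDeriv 0 F (l * z) = (τt - (((l * z) ^ 2 : ℝ) : ℂ)) * W (l * z) := by
        rw [iteratedDeriv_zero]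
      rw [e00]
      have hode := hODE (l * z)
      push_cast [hsC, hcC] at hode ⊢
      linear_combination ((l:ℂ)^2 * (l:ℂ)^3) * hode
  · -- jumps
    -- eventual equalities on the one-sided filters
    have hmemp : ∀ᶠ x in nhdsWithin (0:ℝ) (Ioi 0), x ∈ Ioi (0:ℝ) :=
      eventually_mem_nhdsWithin
    have hmemn : ∀ᶠ x in nhdsWithin (0:ℝ) (Iio 0), x ∈ Iio (0:ℝ) :=
      eventually_mem_nhdsWithin
    have hVp : Vresc c τt W =ᶠ[nhdsWithin (0:ℝ) (Ioi 0)] P 0 :=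
      hmemp.mono fun x hx => hpos x hx
    have hVn : Vresc c τt W =ᶠ[nhdsWithin (0:ℝ) (Iio 0)] G 0 :=
      hmemn.mono fun x hx => hneg x hx
    have hVp1 : deriv (Vresc c τt W) =ᶠ[nhdsWithin (0:ℝ) (Ioi 0)] P 1 :=
      hmemp.mono fun x hx => by
        rw [(hevpos x hx).deriv_eq, hPderiv 0 (by norm_num)]
    have hVn1 : deriv (Vresc c τt W) =ᶠ[nhdsWithin (0:ℝ) (Iio 0)] G 1 :=
      hmemn.mono fun x hx => by
        rw [(hevneg x hx).deriv_eq, hGderiv 0 (by norm_num)]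
    have hVp2 : iteratedDeriv 2 (Vresc c τt W) =ᶠ[nhdsWithin (0:ℝ) (Ioi 0)] P 2 :=
      hmemp.mono fun x hx => by
        rw [(hevpos x hx).iteratedDeriv_eq 2, hPiter 2 (by norm_num)]
    have hVn2 : iteratedDeriv 2 (Vresc c τt W) =ᶠ[nhdsWithin (0:ℝ) (Iio 0)] G 2 :=
      hmemn.mono fun x hx => by
        rw [(hevneg x hx).iteratedDeriv_eq 2, hGiter 2 (by norm_num)]
    refine ⟨P 0 0, G 0 0, P 1 0, G 1 0, P 2 0, G 2 0,
      ?_, ?_, ?_, ?_, ?_, ?_, ?_, ?_, ?_⟩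
    · exact (((hPcont 0 (by norm_num)).tendsto 0).mono_left nhdsWithin_le_nhds).congr' hVp.symm
    · exact (((hGcont 0 (by norm_num)).tendsto 0).mono_left nhdsWithin_le_nhds).congr' hVn.symm
    · simp only [hP_def, hQ_def, hG_def]; push_cast; ring
    · exact (((hPcont 1 (by norm_num)).tendsto 0).mono_left nhdsWithin_le_nhds).congr' hVp1.symm
    · exact (((hGcont 1 (by norm_num)).tendsto 0).mono_left nhdsWithin_le_nhds).congr' hVn1.symm
    · simp only [hP_def, hQ_def, hG_def]; push_cast; ring
    · exact (((hPcont 2 (by norm_num)).tendsto 0).mono_left nhdsWithin_le_nhds).congr' hVp2.symm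
    · exact (((hGcont 2 (by norm_num)).tendsto 0).mono_left nhdsWithin_le_nhds).congr' hVn2.symm
    · simp only [hP_def, hQ_def, hG_def]; push_cast; ring
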